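/- arXiv:0806.0231 — 6 statements merged into one kernel-verified Lean document; each statement's English description precedes it below -/
import Mathlib

section
/- Let n, B be coprime positive integers and let p, q, r be integers with p \ge 1, q \ge 1, r \ge 0 and p*B + q*n \le n*B. Set s := p + r*n. Then floor((q*n + s*B) * (1 + 1/(n*B))) = q*n + s*B + r. -/
theorem floor_estrella4 (n B : ℤ) (hn : 0 < n) (hB : 0 < B)
    (hcop : IsCoprime n B) (p q r : ℤ) (hp : 1 ≤ p) (hq : 1 ≤ q) (hr : 0 ≤ r)
    (hle : p * B + q * n ≤ n * B) :
    ⌊((q * n + (p + r * n) * B : ℤ) : ℚ) * (1 + 1 / ((n : ℚ) * B))⌋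
      = q * n + (p + r * n) * B + r := by
  have hlt : p * B + q * n < n * B := by
    rcases lt_or_eq_of_le hle with h | h
    · exact h
    · exfalso
      have hdvd : n ∣ p * B := ⟨B - q, by linarith [h]⟩
      have hnp : n ∣ p := (IsCoprime.dvd_of_dvd_mul_right hcop) hdvd
      have hpn : p < n := by nlinarith
      have := Int.le_of_dvd (by linarith) hnp
      linarith
  have hNB : (0:ℚ) < (n:ℚ) * B := by positivity
  have hkey : ((q * n + (p + r * n) * B : ℤ) : ℚ) * (1 + 1 / ((n : ℚ) * B))
      - ((q * n + (p + r * n) * B + r : ℤ) : ℚ)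
      = ((q * n + p * B : ℤ) : ℚ) / ((n:ℚ) * B) := by
    field_simp
    push_cast
    ring
  have h1 : (0:ℚ) < ((q * n + p * B : ℤ) : ℚ) / ((n:ℚ) * B) := by
    apply div_pos _ hNB
    have : (0:ℤ) < q * n + p * B := by nlinarith
    exact_mod_cast this
  have h2 : ((q * n + p * B : ℤ) : ℚ) / ((n:ℚ) * B) < 1 := by
    rw [div_lt_one hNB]
    have : ((q * n + p * B : ℤ) : ℚ) < ((n * B : ℤ) : ℚ) := by
      exact_mod_cast by linarith
    push_cast at this ⊢
    linarith
  rw [Int.floor_eq_iff]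
  constructor <;> [nlinarith [h1, hkey]; nlinarith [h2, hkey]]
end

section
/- Let n, B be coprime integers with n \ge 2 and B \ge 2, and let N, B', N'' be nonnegative integers satisfying N*B - n*B' = 1 and n*B' + B*N'' = n*B - 1. Then for all integers p, q \ge 1 and r \ge 0 with p*B + q*n \le n*B, setting s := p + r*n and x := q*n + s*B, one has floor(x*B'/B) + floor(x*N''/n) + floor(x*(1 + 1/(n*B))) = 2*x - 2. -/
private lemma floor_int_div (a b : ℤ) (hb : 0 < b) :
    ⌊(a : ℚ) / (b : ℚ)⌋ = a / b := by
  obtain ⟨m, rfl⟩ := Int.eq_ofNat_of_zero_le hb.le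
  exact_mod_cast Rat.floor_intCast_div_natCast a m

theorem floor_sum_eq_dos (n B : ℤ) (hn : 2 ≤ n) (hB : 2 ≤ B)
    (hcop : IsCoprime n B) (N B' N'' : ℤ)
    (hN : 0 ≤ N) (hB' : 0 ≤ B') (hN'' : 0 ≤ N'')
    (hrel1 : N * B - n * B' = 1) (hrel2 : n * B' + B * N'' = n * B - 1)
    (p q r : ℤ) (hp : 1 ≤ p) (hq : 1 ≤ q) (hr : 0 ≤ r)
    (hle : p * B + q * n ≤ n * B) :
    ⌊((q * n + (p + r * n) * B : ℤ) : ℚ) * (B' : ℚ) / (B : ℚ)⌋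
      + ⌊((q * n + (p + r * n) * B : ℤ) : ℚ) * (N'' : ℚ) / (n : ℚ)⌋
      + ⌊((q * n + (p + r * n) * B : ℤ) : ℚ) * (1 + 1 / ((n : ℚ) * B))⌋
      = 2 * (q * n + (p + r * n) * B) - 2 := by
  have hn0 : (0:ℤ) < n := by omega
  have hB0 : (0:ℤ) < B := by omega
  set x : ℤ := q * n + (p + r * n) * B with hx
  set s : ℤ := p + r * n with hs
  -- basic bounds
  have hqB : q < B := by nlinarith
  have hpn : p < n := by nlinarith
  -- q*n + p*B < n*B (strict, by coprimality)
  have hstrict : q * n + p * B < n * B := by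
    rcases lt_or_eq_of_le (by linarith : q * n + p * B ≤ n * B) with h | h
    · exact h
    · exfalso
      have hdvd : B ∣ q * n := ⟨n - p, by ring_nf; linarith⟩
      have : B ∣ q := (hcop.symm).dvd_of_dvd_mul_right hdvd
      have := Int.le_of_dvd (by omega) this
      omega
  -- N + N'' = n
  have hNn : N + N'' = n := by
    have : B * (N + N'') = B * n := by ring_nf; nlinarith
    exact mul_left_cancel₀ (by omega) this
  have hNB : n * B' = N * B - 1 := by omega
  have hBN : B * N'' = n * B - 1 - n * B' := by omega
  -- floor 1
  have hf1 : ⌊(x : ℚ) * (B' : ℚ) / (B : ℚ)⌋ = q * N + s * B' - 1 := by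
    have : (x : ℚ) * (B' : ℚ) = ((x * B' : ℤ) : ℚ) := by push_cast; ring
    rw [this, floor_int_div _ _ hB0]
    have hxB' : x * B' = (B - q) + (q * N + s * B' - 1) * B := by
      have : x * B' = q * (n * B') + s * B' * B := by rw [hx]; ring
      rw [this, hNB]; ring
    rw [hxB', Int.add_mul_ediv_right _ _ (by omega : B ≠ 0),
      Int.ediv_eq_zero_of_lt (by omega) (by omega)]
    ring
  -- floor 2
  have hf2 : ⌊(x : ℚ) * (N'' : ℚ) / (n : ℚ)⌋ = q * N'' + s * (B - B') - 1 - r := by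
    have : (x : ℚ) * (N'' : ℚ) = ((x * N'' : ℤ) : ℚ) := by push_cast; ring
    rw [this, floor_int_div _ _ hn0]
    have hxN : x * N'' = (n - p) + (q * N'' + s * (B - B') - 1 - r) * n := by
      have : x * N'' = q * n * N'' + s * (B * N'') := by rw [hx]; ring
      rw [this, hBN, hs]; ring
    rw [hxN, Int.add_mul_ediv_right _ _ (by omega : n ≠ 0),
      Int.ediv_eq_zero_of_lt (by omega) (by omega)]
    ring
  -- floor 3
  have hf3 : ⌊(x : ℚ) * (1 + 1 / ((n : ℚ) * B))⌋ = x + r := by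
    have hnB : ((n : ℚ) * B) ≠ 0 := by positivity
    have : (x : ℚ) * (1 + 1 / ((n : ℚ) * B)) = ((x * (n * B + 1) : ℤ) : ℚ) / ((n * B : ℤ) : ℚ) := by
      push_cast; field_simp
    rw [this, floor_int_div _ _ (by positivity)]
    have hxe : x * (n * B + 1) = (q * n + p * B) + (x + r) * (n * B) := by
      rw [hx, hs]; ring
    rw [hxe, Int.add_mul_ediv_right _ _ (by positivity : (0:ℤ) < n * B).ne',
      Int.ediv_eq_zero_of_lt (by nlinarith) hstrict]
    ring
  rw [hf1, hf2, hf3]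
  rw [hx, hs] at *
  ring_nf
  nlinarith [hNn]
end

section
/- Let e, n, b be positive integers with gcd(n, b) = 1. Define H := { p/(n*e) + q/(b*e) + r/e : p, q, r integers, p \ge 1, q \ge 1, r \ge 0, p*b + q*n \le n*b } as a set of rationals, and B := { (p,q,s) : p, q, s integers, p \ge 1, q \ge 1, p*b + q*n \le n*b, 0 \le s \le e - 1 }. Then the map (p,q,s) \mapsto p/(n*e) + q/(b*e) + s/e is a bijection from B onto H \cap [0,1]. -/
private lemma aux_zero (d x : ℤ) (hd : 0 < d) (h : d ∣ x) (h1 : -d < x) (h2 : x < d) :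
    x = 0 := by
  obtain ⟨k, rfl⟩ := h
  rcases lt_trichotomy k 0 with hk | hk | hk
  · nlinarith
  · simp [hk]
  · nlinarith

private lemma key_eq (n b e : ℚ) (hn : n ≠ 0) (hb : b ≠ 0) (he : e ≠ 0) (p q s : ℤ) :
    (p : ℚ) / (n * e) + (q : ℚ) / (b * e) + (s : ℚ) / e
      = ((p : ℚ) * b + q * n + s * (n * b)) / (n * b * e) := by
  field_simp

theorem panoramix_one (e n b : ℕ) (he : 0 < e) (hn : 0 < n) (hb : 0 < b)
    (hcop : Nat.gcd n b = 1) :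
    Set.BijOn
      (fun t : ℤ × ℤ × ℤ =>
        (t.1 : ℚ) / (n * e) + (t.2.1 : ℚ) / (b * e) + (t.2.2 : ℚ) / e)
      {t : ℤ × ℤ × ℤ | 1 ≤ t.1 ∧ 1 ≤ t.2.1 ∧ t.1 * b + t.2.1 * n ≤ n * b ∧
        0 ≤ t.2.2 ∧ t.2.2 ≤ (e : ℤ) - 1}
      ({x : ℚ | ∃ p q r : ℤ, 1 ≤ p ∧ 1 ≤ q ∧ 0 ≤ r ∧ p * b + q * n ≤ n * b ∧
          x = (p : ℚ) / (n * e) + (q : ℚ) / (b * e) + (r : ℚ) / e}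
        ∩ Set.Icc (0 : ℚ) 1) := by
  have hnQ : (n : ℚ) ≠ 0 := Nat.cast_ne_zero.mpr hn.ne'
  have hbQ : (b : ℚ) ≠ 0 := Nat.cast_ne_zero.mpr hb.ne'
  have heQ : (e : ℚ) ≠ 0 := Nat.cast_ne_zero.mpr he.ne'
  have hden : (0 : ℚ) < (n : ℚ) * b * e := by positivity
  have hnZ : (1 : ℤ) ≤ n := by exact_mod_cast hn
  have hbZ : (1 : ℤ) ≤ b := by exact_mod_cast hb
  have heZ : (1 : ℤ) ≤ e := by exact_mod_cast he
  have hnbZ : (0 : ℤ) < (n : ℤ) * b := by positivity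
  refine ⟨?_, ?_, ?_⟩
  · -- MapsTo
    rintro ⟨p, q, s⟩ ⟨hp, hq, hle, hs0, hs1⟩
    simp only [Set.mem_inter_iff, Set.mem_setOf_eq, Set.mem_Icc]
    refine ⟨⟨p, q, s, hp, hq, hs0, hle, rfl⟩, ?_, ?_⟩
    · have h0 : (0 : ℤ) ≤ p * b + q * n + s * (n * b) := by nlinarith
      rw [key_eq _ _ _ hnQ hbQ heQ]
      apply div_nonneg _ hden.le
      have : ((0 : ℤ) : ℚ) ≤ ((p * b + q * n + s * (n * b) : ℤ) : ℚ) := by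
        exact_mod_cast h0
      push_cast at this
      linarith
    · have h1 : p * b + q * n + s * (n * b) ≤ (n : ℤ) * b * e := by nlinarith
      rw [key_eq _ _ _ hnQ hbQ heQ, div_le_one hden]
      have : ((p * b + q * n + s * (n * b) : ℤ) : ℚ) ≤ (((n : ℤ) * b * e : ℤ) : ℚ) := by
        exact_mod_cast h1
      push_cast at this
      linarith
  · -- InjOn
    rintro ⟨p, q, s⟩ ⟨hp, hq, hle, hs0, hs1⟩ ⟨p', q', s'⟩ ⟨hp', hq', hle', hs0', hs1'⟩ heq
    simp only [key_eq _ _ _ hnQ hbQ heQ] at heq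
    rw [div_eq_div_iff hden.ne' hden.ne'] at heq
    have heqQ : ((p : ℚ) * b + q * n + s * (n * b)) = ((p' : ℚ) * b + q' * n + s' * (n * b)) :=
      mul_right_cancel₀ hden.ne' heq
    have heqZ : p * b + q * n + s * ((n : ℤ) * b) = p' * b + q' * n + s' * ((n : ℤ) * b) := by
      exact_mod_cast heqQ
    -- first, s = s'
    have hA : (2 : ℤ) ≤ p * b + q * n := by nlinarith
    have hA' : (2 : ℤ) ≤ p' * b + q' * n := by nlinarith
    have hdiff : (s - s') * ((n : ℤ) * b) = (p' * b + q' * n) - (p * b + q * n) := by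
      linear_combination heqZ
    have hsz : (s - s') * ((n : ℤ) * b) = 0 := by
      apply aux_zero ((n : ℤ) * b) _ hnbZ ⟨s - s', mul_comm _ _⟩
      · rw [hdiff]; linarith
      · rw [hdiff]; linarith
    have hss : s = s' := by
      have := mul_eq_zero.mp hsz
      rcases this with h | h
      · linarith
      · exact absurd h hnbZ.ne'
    subst hss
    have hAA : p * b + q * n = p' * b + q' * n := by linarith
    -- p = p'
    have hcp : IsCoprime (n : ℤ) (b : ℤ) := by
      rw [Int.isCoprime_iff_gcd_eq_one, Int.gcd_natCast_natCast]
      exact hcop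
    have hdvd : (n : ℤ) ∣ (p - p') * b := ⟨q' - q, by linear_combination hAA⟩
    have hdvd' : (n : ℤ) ∣ (p - p') := hcp.dvd_of_dvd_mul_right hdvd
    have hqn : (n : ℤ) ≤ q * n := le_mul_of_one_le_left (by linarith) hq
    have hqn' : (n : ℤ) ≤ q' * n := le_mul_of_one_le_left (by linarith) hq'
    have hpn : p < (n : ℤ) := lt_of_mul_lt_mul_right (by linarith : p * b < (n : ℤ) * b) (by linarith)
    have hpn' : p' < (n : ℤ) := lt_of_mul_lt_mul_right (by linarith : p' * b < (n : ℤ) * b) (by linarith)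
    have hpp : p - p' = 0 := by
      apply aux_zero (n : ℤ) _ (by linarith) hdvd' <;> linarith
    have hpe : p = p' := by linarith
    subst hpe
    have hqe : q = q' := by
      have : q * (n : ℤ) = q' * n := by linarith
      exact mul_right_cancel₀ (by linarith : (n : ℤ) ≠ 0) this
    subst hqe
    rfl
  · -- SurjOn
    rintro x ⟨⟨p, q, r, hp, hq, hr, hle, hx⟩, hx0, hx1⟩
    refine ⟨(p, q, r), ⟨hp, hq, hle, hr, ?_⟩, hx.symm⟩
    have hx1' : ((p : ℚ) * b + q * n + r * (n * b)) / ((n : ℚ) * b * e) ≤ 1 := by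
      rw [← key_eq _ _ _ hnQ hbQ heQ, ← hx]; exact hx1
    rw [div_le_one hden] at hx1'
    have hZ : p * b + q * n + r * ((n : ℤ) * b) ≤ (n : ℤ) * b * e := by
      have : ((p * b + q * n + r * ((n : ℤ) * b) : ℤ) : ℚ) ≤ (((n : ℤ) * b * e : ℤ) : ℚ) := by
        push_cast
        linarith
      exact_mod_cast this
    have hpb : (b : ℤ) ≤ p * b := le_mul_of_one_le_left (by linarith) hp
    have hqn : (n : ℤ) ≤ q * n := le_mul_of_one_le_left (by linarith) hq
    have hring : (e : ℤ) * ((n : ℤ) * b) = (n : ℤ) * b * e := by ring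
    have hmul : r * ((n : ℤ) * b) < (e : ℤ) * ((n : ℤ) * b) := by linarith
    have hre : r < (e : ℤ) := lt_of_mul_lt_mul_right hmul hnbZ.le
    linarith
end

section
/- Let e, n, b be positive integers with gcd(n, b) = 1, and define H and B as follows: H := { p/(n*e) + q/(b*e) + r/e : p,q,r integers, p,q \ge 1, r \ge 0, p*b + q*n \le n*b } and B := { (p,q,s) integer triples : p,q \ge 1, p*b + q*n \le n*b, 0 \le s \le e-1 }. Then every element x of H with x > 1 can be written uniquely as x = (p/(n*e) + q/(b*e) + s/e) + r with (p,q,s) \in B and r a positive integer. -/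
lemma panoramix_aux_strict (n b : ℤ) (hn : 0 < n) (hb : 0 < b)
    (hcop : IsCoprime n b) (p q : ℤ) (hp : 1 ≤ p) (hq : 1 ≤ q)
    (hpq : p * b + q * n ≤ n * b) : p * b + q * n < n * b := by
  rcases lt_or_eq_of_le hpq with h | h
  · exact h
  · exfalso
    have hpn : p < n := by nlinarith
    have hdvd : n ∣ p * b := ⟨b - q, by linear_combination h⟩
    have h2 := hcop.dvd_of_dvd_mul_right hdvd
    have := Int.le_of_dvd (by linarith) h2
    linarith

lemma panoramix_aux_core (e n b : ℕ) (he : 0 < e) (hn : 0 < n) (hb : 0 < b)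
    (hcop : IsCoprime (n : ℤ) (b : ℤ)) (p q s : ℤ) (hp : 1 ≤ p) (hq : 1 ≤ q)
    (hpq : p * b + q * n ≤ n * b) (hs0 : 0 ≤ s) (hs1 : s ≤ (e : ℤ) - 1) :
    0 < (p : ℚ) / (n * e) + (q : ℚ) / (b * e) + (s : ℚ) / e ∧
      (p : ℚ) / (n * e) + (q : ℚ) / (b * e) + (s : ℚ) / e < 1 := by
  have heZ : (0 : ℤ) < e := by exact_mod_cast he
  have hnZ : (0 : ℤ) < n := by exact_mod_cast hn
  have hbZ : (0 : ℤ) < b := by exact_mod_cast hb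
  have hnQ : (0 : ℚ) < n := by exact_mod_cast hn
  have hbQ : (0 : ℚ) < b := by exact_mod_cast hb
  have heQ : (0 : ℚ) < e := by exact_mod_cast he
  have hden : (0 : ℚ) < (n : ℚ) * b * e := by positivity
  have key : (p : ℚ) / (n * e) + (q : ℚ) / (b * e) + (s : ℚ) / e
      = ((p : ℚ) * b + (q : ℚ) * n + (s : ℚ) * ((n : ℚ) * b)) / ((n : ℚ) * b * e) := by
    field_simp
  have hstrict := panoramix_aux_strict n b hnZ hbZ hcop p q hp hq hpq
  have hnum0 : (0 : ℤ) < p * b + q * n + s * (n * b) := by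
    nlinarith [mul_nonneg hs0 (mul_pos hnZ hbZ).le, mul_pos (lt_of_lt_of_le one_pos hp) hbZ,
      mul_pos (lt_of_lt_of_le one_pos hq) hnZ]
  have hnum1 : p * b + q * n + s * (n * b) < n * b * e := by
    nlinarith [mul_le_mul_of_nonneg_right hs1 (le_of_lt (mul_pos hnZ hbZ))]
  constructor
  · rw [key]
    apply div_pos _ hden
    exact_mod_cast hnum0
  · rw [key, div_lt_one hden]
    exact_mod_cast hnum1

set_option maxHeartbeats 1000000 in
theorem panoramix_two (e n b : ℕ) (he : 0 < e) (hn : 0 < n) (hb : 0 < b)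
    (hcop : Nat.gcd n b = 1) (x : ℚ)
    (hx : x ∈ {y : ℚ | ∃ p q r : ℤ, 1 ≤ p ∧ 1 ≤ q ∧ 0 ≤ r ∧ p * b + q * n ≤ n * b ∧
      y = (p : ℚ) / (n * e) + (q : ℚ) / (b * e) + (r : ℚ) / e})
    (hx1 : 1 < x) :
    ∃! t : (ℤ × ℤ × ℤ) × ℤ,
      (1 ≤ t.1.1 ∧ 1 ≤ t.1.2.1 ∧ t.1.1 * b + t.1.2.1 * n ≤ n * b ∧
        0 ≤ t.1.2.2 ∧ t.1.2.2 ≤ (e : ℤ) - 1) ∧ 1 ≤ t.2 ∧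
      x = ((t.1.1 : ℚ) / (n * e) + (t.1.2.1 : ℚ) / (b * e) + (t.1.2.2 : ℚ) / e)
        + (t.2 : ℚ) := by
  obtain ⟨p, q, r, hp, hq, hr, hpq, hxeq⟩ := hx
  have heZ : (0 : ℤ) < e := by exact_mod_cast he
  have hnZ : (0 : ℤ) < n := by exact_mod_cast hn
  have hbZ : (0 : ℤ) < b := by exact_mod_cast hb
  have heQ : (0 : ℚ) < e := by exact_mod_cast he
  have hcopZ : IsCoprime (n : ℤ) (b : ℤ) := by
    rw [Int.isCoprime_iff_gcd_eq_one]
    exact_mod_cast hcop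
  -- existence data
  set s : ℤ := r % e with hs_def
  set m : ℤ := r / e with hm_def
  have hs0 : 0 ≤ s := Int.emod_nonneg r (ne_of_gt heZ)
  have hs1 : s < e := Int.emod_lt_of_pos r heZ
  have hrdecomp : r = e * m + s := (Int.mul_ediv_add_emod r e).symm
  have hxeq2 : x = ((p : ℚ) / (n * e) + (q : ℚ) / (b * e) + (s : ℚ) / e) + (m : ℚ) := by
    rw [hxeq]
    have hr' : (r : ℚ) = (e : ℚ) * (m : ℚ) + (s : ℚ) := by exact_mod_cast hrdecomp
    rw [hr']
    field_simp
    ring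
  have hcore := panoramix_aux_core e n b he hn hb hcopZ p q s hp hq hpq hs0 (by omega)
  have hm1 : 1 ≤ m := by
    have hmQ : (0 : ℚ) < (m : ℚ) := by linarith [hcore.2, hxeq2 ▸ hx1]
    have : (0 : ℤ) < m := by exact_mod_cast hmQ
    omega
  refine ⟨⟨⟨p, q, s⟩, m⟩, ⟨⟨hp, hq, hpq, hs0, show s ≤ (e:ℤ) - 1 by omega⟩, hm1, hxeq2⟩, ?_⟩
  rintro ⟨⟨p2, q2, s2⟩, m2⟩ ⟨⟨hp2, hq2, hpq2, hs20, hs21⟩, hm2, hxeq3⟩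
  simp only at hxeq3 hp2 hq2 hpq2 hs20 hs21 hm2
  have hcore2 := panoramix_aux_core e n b he hn hb hcopZ p2 q2 s2 hp2 hq2 hpq2 hs20 hs21
  -- m2 = m
  have hmm : m2 = m := by
    have hdiff : ((m2 - m : ℤ) : ℚ)
        = ((p : ℚ) / (n * e) + (q : ℚ) / (b * e) + (s : ℚ) / e)
          - ((p2 : ℚ) / (n * e) + (q2 : ℚ) / (b * e) + (s2 : ℚ) / e) := by
      push_cast
      have := hxeq2.symm.trans hxeq3
      linarith
    have h1 : ((m2 - m : ℤ) : ℚ) < 1 := by rw [hdiff]; linarith [hcore.2, hcore2.1]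
    have h2 : (-1 : ℚ) < ((m2 - m : ℤ) : ℚ) := by rw [hdiff]; linarith [hcore.1, hcore2.2]
    have h1' : (m2 - m : ℤ) < 1 := by exact_mod_cast h1
    have h2' : (-1 : ℤ) < m2 - m := by exact_mod_cast h2
    omega
  subst hmm
  -- cores equal
  have hcoreeq : (p : ℚ) / (n * e) + (q : ℚ) / (b * e) + (s : ℚ) / e
      = (p2 : ℚ) / (n * e) + (q2 : ℚ) / (b * e) + (s2 : ℚ) / e := by
    have := hxeq2.symm.trans hxeq3
    linarith
  have hnQ : (n : ℚ) ≠ 0 := by positivity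
  have hbQ : (b : ℚ) ≠ 0 := by positivity
  have heQ' : (e : ℚ) ≠ 0 := by positivity
  have hdenQ : (0 : ℚ) < (n : ℚ) * b * e := by positivity
  have key1 : (p : ℚ) / (n * e) + (q : ℚ) / (b * e) + (s : ℚ) / e
      = (((p * b + q * n + s * (n * b) : ℤ)) : ℚ) / ((n : ℚ) * b * e) := by
    push_cast; field_simp
  have key2 : (p2 : ℚ) / (n * e) + (q2 : ℚ) / (b * e) + (s2 : ℚ) / e
      = (((p2 * b + q2 * n + s2 * (n * b) : ℤ)) : ℚ) / ((n : ℚ) * b * e) := by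
    push_cast; field_simp
  rw [key1, key2, div_eq_div_iff hdenQ.ne' hdenQ.ne'] at hcoreeq
  have hnumQ := mul_right_cancel₀ hdenQ.ne' hcoreeq
  have hnum : p * b + q * n + s * (n * b) = p2 * b + q2 * n + s2 * (n * b) := by
    exact_mod_cast hnumQ
  -- p = p2
  have hpn : p < n := lt_of_mul_lt_mul_right
    (by nlinarith [mul_le_mul_of_nonneg_right hq hnZ.le] : p * (b:ℤ) < n * b) hbZ.le
  have hp2n : p2 < n := lt_of_mul_lt_mul_right
    (by nlinarith [mul_le_mul_of_nonneg_right hq2 hnZ.le] : p2 * (b:ℤ) < n * b) hbZ.le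
  have hdvdp : (n : ℤ) ∣ (p - p2) * b := ⟨(q2 - q) + (s2 - s) * b, by linear_combination hnum⟩
  have hdvdp' := hcopZ.dvd_of_dvd_mul_right hdvdp
  have hpp : p - p2 = 0 := Int.eq_zero_of_abs_lt_dvd hdvdp' (abs_lt.mpr ⟨by omega, by omega⟩)
  -- q = q2
  have hqb : q < b := lt_of_mul_lt_mul_right
    (by nlinarith [mul_le_mul_of_nonneg_right hp hbZ.le] : q * (n:ℤ) < b * n) hnZ.le
  have hq2b : q2 < b := lt_of_mul_lt_mul_right
    (by nlinarith [mul_le_mul_of_nonneg_right hp2 hbZ.le] : q2 * (n:ℤ) < b * n) hnZ.le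
  have hdvdq : (b : ℤ) ∣ (q - q2) * n := ⟨(p2 - p) + (s2 - s) * n, by linear_combination hnum⟩
  have hdvdq' := hcopZ.symm.dvd_of_dvd_mul_right hdvdq
  have hqq : q - q2 = 0 := Int.eq_zero_of_abs_lt_dvd hdvdq' (abs_lt.mpr ⟨by omega, by omega⟩)
  -- s = s2
  have hss : s2 = s := by
    have h0 : (s - s2) * (n * b) = 0 := by linear_combination hnum - b * hpp - n * hqq
    have hnb : (n : ℤ) * b ≠ 0 := by positivity
    have := mul_eq_zero.mp h0
    rcases this with h | h
    · omega
    · exact absurd h hnb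
  have hpp' : p2 = p := by omega
  have hqq' : q2 = q := by omega
  subst hpp' hqq' hss
  rfl
end

section
/- Let a, b be coprime positive integers and set H := { p/a + q/b : p, q positive integers }. Then the map (s,q) \mapsto s/a + q/b is a bijection from T := { (s,q) : 1 \le s \le a, 1 \le q \le b } onto the set Omega := { x \in H : x \le 2 and x - 1 \notin H }. -/
theorem wasp_one (a b : ℕ) (ha : 0 < a) (hb : 0 < b) (hcop : Nat.gcd a b = 1) :
    Set.BijOn (fun t : ℤ × ℤ => (t.1 : ℚ) / a + (t.2 : ℚ) / b)
      {t : ℤ × ℤ | 1 ≤ t.1 ∧ t.1 ≤ a ∧ 1 ≤ t.2 ∧ t.2 ≤ b}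
      {x : ℚ | (∃ p q : ℤ, 1 ≤ p ∧ 1 ≤ q ∧ x = (p : ℚ) / a + (q : ℚ) / b) ∧
        x ≤ 2 ∧ ¬ ∃ p q : ℤ, 1 ≤ p ∧ 1 ≤ q ∧ x - 1 = (p : ℚ) / a + (q : ℚ) / b} := by
  have ha0 : (a : ℚ) ≠ 0 := Nat.cast_ne_zero.mpr ha.ne'
  have hb0 : (b : ℚ) ≠ 0 := Nat.cast_ne_zero.mpr hb.ne'
  have haQ : (0:ℚ) < a := by exact_mod_cast ha
  have hbQ : (0:ℚ) < b := by exact_mod_cast hb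
  have haZ : (0:ℤ) < a := by exact_mod_cast ha
  have hbZ : (0:ℤ) < b := by exact_mod_cast hb
  have hcz : IsCoprime (a:ℤ) (b:ℤ) := by
    rw [Int.isCoprime_iff_gcd_eq_one]
    simpa using hcop
  have key : ∀ p q p' q' : ℤ, ((p:ℚ)/a + (q:ℚ)/b = (p':ℚ)/a + (q':ℚ)/b) ↔
      p * b + q * a = p' * b + q' * a := by
    intro p q p' q'
    rw [div_add_div _ _ ha0 hb0, div_add_div _ _ ha0 hb0,
      div_eq_div_iff (by positivity) (by positivity)]
    constructor
    · intro h
      have h2 := mul_right_cancel₀ (show ((a:ℚ)*b) ≠ 0 by positivity) h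
      have h3 : ((p*b + q*a : ℤ) : ℚ) = ((p'*b + q'*a : ℤ) : ℚ) := by
        push_cast; linear_combination h2
      exact_mod_cast h3
    · intro h
      have h2 : ((p*b + q*a : ℤ) : ℚ) = ((p'*b + q'*a : ℤ) : ℚ) := by exact_mod_cast h
      push_cast at h2
      linear_combination ((a:ℚ)*b) * h2
  constructor
  · -- MapsTo
    rintro ⟨s, q⟩ ⟨hs1, hs2, hq1, hq2⟩
    refine ⟨⟨s, q, hs1, hq1, rfl⟩, ?_, ?_⟩
    · have h1 : (s:ℚ)/a ≤ 1 := by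
        rw [div_le_one haQ]; exact_mod_cast hs2
      have h2 : (q:ℚ)/b ≤ 1 := by
        rw [div_le_one hbQ]; exact_mod_cast hq2
      simp only; linarith
    · rintro ⟨p, q', hp, hq', heq⟩
      have heq2 : (s:ℚ)/a + (q:ℚ)/b = ((p + a : ℤ):ℚ)/a + (q':ℚ)/b := by
        push_cast
        rw [add_div]
        have : (a:ℚ)/a = 1 := div_self ha0
        simp only at heq
        linarith [heq, this]
      rw [key] at heq2
      have hE : (s - p) * b = (q' - q + b) * a := by ring_nf; ring_nf at heq2; linarith
      have hpos : 0 < s - p := by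
        have h1 : (1:ℤ) ≤ q' - q + b := by linarith
        nlinarith
      have hdvd : (a:ℤ) ∣ (s - p) := by
        refine hcz.dvd_of_dvd_mul_right ?_
        exact ⟨q' - q + b, by linarith [hE]⟩
      have := Int.le_of_dvd hpos hdvd
      linarith
  constructor
  · -- InjOn
    rintro ⟨s, q⟩ ⟨hs1, hs2, hq1, hq2⟩ ⟨s', q'⟩ ⟨hs1', hs2', hq1', hq2'⟩ heq
    simp only at heq
    rw [key] at heq
    have hdvd : (a:ℤ) ∣ (s - s') := by
      refine hcz.dvd_of_dvd_mul_right ?_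
      exact ⟨q' - q, by linarith [heq]⟩
    have hzero : s - s' = 0 := by
      rcases hdvd with ⟨k, hk⟩
      have hk0 : k = 0 := by nlinarith
      subst hk0; simpa using hk
    have hs : s = s' := by omega
    have hq : q = q' := by
      have : (q - q') * a = 0 := by nlinarith [heq]
      have := mul_eq_zero.mp this
      omega
    simp [hs, hq]
  · -- SurjOn
    rintro x ⟨⟨p, q, hp, hq, hx⟩, hle, hnot⟩
    have hpa : p ≤ a := by
      by_contra h
      push_neg at h
      exact hnot ⟨p - a, q, by omega, hq, by
        rw [hx]; push_cast; field_simp; ring⟩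
    have hqb : q ≤ b := by
      by_contra h
      push_neg at h
      exact hnot ⟨p, q - b, hp, by omega, by
        rw [hx]; push_cast; field_simp; ring⟩
    exact ⟨(p, q), ⟨hp, hpa, hq, hqb⟩, hx.symm⟩
end

section
/- Let a, b be coprime positive integers and set H := { p/a + q/b : p, q positive integers }. Then every x \in H with x > 2 can be written uniquely as x = s/a + q/b + r where 1 \le s \le a, 1 \le q \le b, and r is a positive integer. -/
theorem wasp_two (a b : ℕ) (ha : 0 < a) (hb : 0 < b) (hcop : Nat.gcd a b = 1)
    (x : ℚ) (hx : ∃ p q : ℤ, 1 ≤ p ∧ 1 ≤ q ∧ x = (p : ℚ) / a + (q : ℚ) / b)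
    (hx2 : 2 < x) :
    ∃! t : ℤ × ℤ × ℤ,
      (1 ≤ t.1 ∧ t.1 ≤ a ∧ 1 ≤ t.2.1 ∧ t.2.1 ≤ b ∧ 1 ≤ t.2.2) ∧
      x = (t.1 : ℚ) / a + (t.2.1 : ℚ) / b + (t.2.2 : ℚ) := by
  obtain ⟨p, q, hp, hq, hxe⟩ := hx
  have ha' : (0:ℤ) < (a:ℤ) := by exact_mod_cast ha
  have hb' : (0:ℤ) < (b:ℤ) := by exact_mod_cast hb
  have haQ : ((a:ℚ)) ≠ 0 := by positivity
  have hbQ : ((b:ℚ)) ≠ 0 := by positivity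
  have hcopZ : IsCoprime (a:ℤ) (b:ℤ) := by
    rw [Int.isCoprime_iff_gcd_eq_one]; exact_mod_cast hcop
  obtain ⟨s, m, hs1, hs2, hpm⟩ :
      ∃ s m : ℤ, 1 ≤ s ∧ s ≤ (a:ℤ) ∧ p = s + a * m := by
    refine ⟨(p - 1) % a + 1, (p - 1) / a, ?_, ?_, ?_⟩
    · have := Int.emod_nonneg (p - 1) (ne_of_gt ha'); omega
    · have := Int.emod_lt_of_pos (p - 1) ha'; omega
    · have := Int.emod_add_mul_ediv (p - 1) (a:ℤ); omega
  obtain ⟨q', n, hq1, hq2, hqn⟩ :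
      ∃ q' n : ℤ, 1 ≤ q' ∧ q' ≤ (b:ℤ) ∧ q = q' + b * n := by
    refine ⟨(q - 1) % b + 1, (q - 1) / b, ?_, ?_, ?_⟩
    · have := Int.emod_nonneg (q - 1) (ne_of_gt hb'); omega
    · have := Int.emod_lt_of_pos (q - 1) hb'; omega
    · have := Int.emod_add_mul_ediv (q - 1) (b:ℤ); omega
  have hxeq : x = (s:ℚ) / a + (q':ℚ) / b + ((m + n : ℤ):ℚ) := by
    rw [hxe, hpm, hqn]
    push_cast
    field_simp
    ring
  have hr1 : 1 ≤ m + n := by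
    have h1 : (s:ℚ) / a ≤ 1 := by
      rw [div_le_one (by positivity)]; exact_mod_cast hs2
    have h2 : (q':ℚ) / b ≤ 1 := by
      rw [div_le_one (by positivity)]; exact_mod_cast hq2
    have h3 : (0:ℚ) < ((m + n : ℤ):ℚ) := by
      rw [hxeq] at hx2
      linarith
    exact_mod_cast h3
  refine ⟨(s, q', m + n), ⟨⟨hs1, hs2, hq1, hq2, hr1⟩, hxeq⟩, ?_⟩
  rintro ⟨s2, q2, r2⟩ ⟨⟨hs1', hs2', hq1', hq2', hr1'⟩, heq⟩
  simp only at *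
  have hQ : (s2:ℚ) / a + (q2:ℚ) / b + (r2:ℚ) = (s:ℚ) / a + (q':ℚ) / b + ((m + n : ℤ):ℚ) := by
    rw [← heq, ← hxeq]
  have key : (b:ℤ) * s2 + a * q2 + a * b * r2 = b * s + a * q' + a * b * (m + n) := by
    have h : (((b:ℤ) * s2 + a * q2 + a * b * r2 : ℤ) : ℚ)
        = (((b:ℤ) * s + a * q' + a * b * (m + n) : ℤ) : ℚ) := by
      push_cast
      field_simp at hQ
      push_cast at hQ
      linear_combination hQ
    exact_mod_cast h
  have hdvd : (a:ℤ) ∣ (s2 - s) * b := by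
    refine ⟨q' - q2 + b * (m + n) - b * r2, ?_⟩
    linear_combination key
  have hdvd2 : (a:ℤ) ∣ s2 - s := hcopZ.dvd_of_dvd_mul_right hdvd
  have hse : s2 = s := by
    have := Int.eq_zero_of_abs_lt_dvd hdvd2 (by rw [abs_lt]; omega)
    omega
  have hdvdb : (b:ℤ) ∣ (q2 - q') * a := by
    refine ⟨s - s2 + a * (m + n) - a * r2, ?_⟩
    linear_combination key
  have hdvdb2 : (b:ℤ) ∣ q2 - q' := hcopZ.symm.dvd_of_dvd_mul_right hdvdb
  have hqe : q2 = q' := by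
    have := Int.eq_zero_of_abs_lt_dvd hdvdb2 (by rw [abs_lt]; omega)
    omega
  have hre : r2 = m + n := by
    subst hse hqe
    have h4 : (a:ℤ) * b * r2 = a * b * (m + n) := by omega
    have hab : (0:ℤ) < a * b := by positivity
    exact mul_left_cancel₀ (ne_of_gt hab) h4
  simp [hse, hqe, hre]
end
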